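/- For every n ≥ 3, the proper conflict-free chromatic number of the complete subdivision SK_n of the complete graph K_n equals n. -/

import Mathlib

open SimpleGraph

/-- A proper conflict-free coloring: proper, and every non-isolated vertex has a color
appearing exactly once in its open neighborhood. -/
def IsPCFColoring {V : Type*} (G : SimpleGraph V) {n : ℕ} (c : V → Fin n) : Prop :=
  (∀ u v, G.Adj u v → c u ≠ c v) ∧
  ∀ v : V, (G.neighborSet v).Nonempty →
    ∃ k : Fin n, ∃! u, u ∈ G.neighborSet v ∧ c u = k

/-- The PCF chromatic number. -/
noncomputable def pcfChromNum {V : Type*} (G : SimpleGraph V) : ℕ :=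
  sInf {n | ∃ c : V → Fin n, IsPCFColoring G c}

/-- The chromatic number (as a natural number). -/
noncomputable def chromNum {V : Type*} (G : SimpleGraph V) : ℕ :=
  sInf {n | G.Colorable n}
/-- The complete subdivision of a graph: every edge subdivided exactly once. -/
def subdiv {V : Type*} (G : SimpleGraph V) : SimpleGraph (V ⊕ G.edgeSet) :=
  SimpleGraph.fromRel (fun a b => match a, b with
    | Sum.inl v, Sum.inr e => v ∈ (e : Sym2 V)
    | _, _ => False)

/-! ### Auxiliary material -/

lemma subdiv_adj_inl_inr {V : Type*} (G : SimpleGraph V) (v : V) (e : G.edgeSet) :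
    (subdiv G).Adj (Sum.inl v) (Sum.inr e) ↔ v ∈ (e : Sym2 V) := by
  simp [subdiv, SimpleGraph.fromRel_adj]

lemma subdiv_not_adj_inl_inl {V : Type*} (G : SimpleGraph V) (v w : V) :
    ¬ (subdiv G).Adj (Sum.inl v) (Sum.inl w) := by
  simp [subdiv, SimpleGraph.fromRel_adj]

lemma subdiv_not_adj_inr_inr {V : Type*} (G : SimpleGraph V) (e f : G.edgeSet) :
    ¬ (subdiv G).Adj (Sum.inr e) (Sum.inr f) := by
  simp [subdiv, SimpleGraph.fromRel_adj]

/-- The coloring function on pairs. -/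
def pcfF (n : ℕ) [NeZero n] (i j : Fin n) : Fin n :=
  if i = 0 ∨ j = 0 then (if i + j + 1 = 0 then 1 else i + j + 1) else i + j

lemma pcfF_symm (n : ℕ) [NeZero n] (i j : Fin n) : pcfF n i j = pcfF n j i := by
  unfold pcfF
  rw [add_comm i j]
  exact if_congr or_comm rfl rfl

/-- The coloring function on `Sym2`. -/
def pcfFe (n : ℕ) [NeZero n] : Sym2 (Fin n) → Fin n :=
  Sym2.lift ⟨pcfF n, pcfF_symm n⟩

@[simp] lemma pcfFe_mk (n : ℕ) [NeZero n] (i j : Fin n) :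
    pcfFe n s(i, j) = pcfF n i j := rfl

/-- The PCF coloring of the subdivided complete graph. -/
def pcfCol (n : ℕ) [NeZero n] :
    (Fin n ⊕ (⊤ : SimpleGraph (Fin n)).edgeSet) → Fin n :=
  Sum.elim id fun e => pcfFe n (e : Sym2 (Fin n))

section Facts
variable {n : ℕ} [NeZero n]

lemma fin_one_ne_zero (h3 : 3 ≤ n) : (1 : Fin n) ≠ 0 := by
  haveI : Nontrivial (Fin n) := Fin.nontrivial_iff_two_le.mpr (by omega)
  intro h'
  have h2 : ((1 : Fin n) : ℕ) = 1 % n := rfl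
  have h0 : ((0 : Fin n) : ℕ) = 0 := rfl
  rw [h', h0, Nat.mod_eq_of_lt (by omega)] at h2
  omega

lemma fin_two_ne_zero (h3 : 3 ≤ n) : (2 : Fin n) ≠ 0 := by
  intro h'
  have h2 : ((2 : Fin n) : ℕ) = 2 % n := rfl
  have h0 : ((0 : Fin n) : ℕ) = 0 := rfl
  rw [h', h0, Nat.mod_eq_of_lt (by omega)] at h2
  omega

lemma fin_one_add_one_eq_two (h3 : 3 ≤ n) : (1 : Fin n) + 1 = 2 :=
  Fin.ext (by simp [Fin.val_add, Nat.mod_eq_of_lt (show 1 < n by omega), Nat.mod_eq_of_lt (show 2 < n by omega)])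

lemma fin_add_left_cancel₀ {i j : Fin n} (h : i + j = i) : j = 0 :=
  add_left_cancel (by rw [h, add_zero] : i + j = i + 0)

lemma pcfF_ne_left (h3 : 3 ≤ n) {i j : Fin n} (hij : i ≠ j) : pcfF n i j ≠ i := by
  unfold pcfF
  split
  · rename_i h0
    split
    · rename_i hb
      -- value is 1
      intro h1
      rcases h0 with h0 | h0
      · exact fin_one_ne_zero h3 (h1.trans h0)
      · -- j = 0, so i + 1 = 0 and 1 = i; then 1 + 1 = 0 contradicting 2 ≠ 0
        subst h0
        rw [add_zero] at hb
        rw [← h1] at hb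
        rw [fin_one_add_one_eq_two h3] at hb
        exact fin_two_ne_zero h3 hb
    · rename_i hb
      intro h1
      rcases h0 with h0 | h0
      · subst h0
        rw [zero_add] at h1 hb
        -- h1 : j + 1 = 0 contradicts hb
        exact hb h1
      · subst h0
        rw [add_zero] at h1
        exact fin_one_ne_zero h3 (fin_add_left_cancel₀ h1)
  · rename_i h0
    push_neg at h0
    intro h1
    exact h0.2 (fin_add_left_cancel₀ h1)

lemma pcfF_ne_right (h3 : 3 ≤ n) {i j : Fin n} (hij : i ≠ j) : pcfF n i j ≠ j := by
  rw [pcfF_symm]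
  exact pcfF_ne_left h3 (Ne.symm hij)

lemma pcfF_zero_ne_zero (h3 : 3 ≤ n) (j : Fin n) : pcfF n 0 j ≠ 0 := by
  unfold pcfF
  rw [if_pos (Or.inl rfl), zero_add]
  split
  · exact fin_one_ne_zero h3
  · rename_i hb; exact hb

lemma pcfF_of_ne_zero {i j : Fin n} (hi : i ≠ 0) (hj : j ≠ 0) :
    pcfF n i j = i + j := by
  unfold pcfF
  rw [if_neg (by push_neg; exact ⟨hi, hj⟩)]

lemma pcfF_zero_eq_two_iff (h3 : 3 ≤ n) {j : Fin n} :
    pcfF n 0 j = 2 ↔ j = 1 := by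
  unfold pcfF
  rw [if_pos (Or.inl rfl), zero_add]
  constructor
  · intro h
    split at h
    · exfalso
      rw [← fin_one_add_one_eq_two h3] at h
      exact fin_one_ne_zero h3 (left_eq_add.mp h)
    · rw [← fin_one_add_one_eq_two h3] at h
      exact add_right_cancel h
  · intro h
    subst h
    rw [if_neg]
    · exact fin_one_add_one_eq_two h3
    · rw [fin_one_add_one_eq_two h3]
      exact fin_two_ne_zero h3

end Facts

section MoreAux

variable {n : ℕ} [NeZero n]

lemma subdiv_mem_nbhd_inr {V : Type*} (G : SimpleGraph V) (e : G.edgeSet)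
    (u : V ⊕ G.edgeSet) :
    u ∈ (subdiv G).neighborSet (Sum.inr e) ↔
      ∃ v, u = Sum.inl v ∧ v ∈ (e : Sym2 V) := by
  cases u with
  | inl v =>
    rw [SimpleGraph.mem_neighborSet, SimpleGraph.adj_comm, subdiv_adj_inl_inr]
    simp
  | inr f =>
    simp [SimpleGraph.mem_neighborSet, subdiv_not_adj_inr_inr]

lemma subdiv_mem_nbhd_inl {V : Type*} (G : SimpleGraph V) (i : V)
    (u : V ⊕ G.edgeSet) :
    u ∈ (subdiv G).neighborSet (Sum.inl i) ↔
      ∃ e, u = Sum.inr e ∧ i ∈ (e : Sym2 V) := by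
  cases u with
  | inl v =>
    simp [SimpleGraph.mem_neighborSet, subdiv_not_adj_inl_inl]
  | inr f =>
    rw [SimpleGraph.mem_neighborSet, subdiv_adj_inl_inr]
    simp

lemma four_le_of_add_self (h3 : 3 ≤ n) {i : Fin n} (h0 : i ≠ 0) (h : i + i = 0) :
    4 ≤ n := by
  have hv : (i.val + i.val) % n = 0 := by
    have := congrArg Fin.val h
    simpa [Fin.add_def] using this
  have hd : n ∣ i.val + i.val := Nat.dvd_of_mod_eq_zero hv
  have hi : i.val ≠ 0 := fun hh => h0 (Fin.ext (by simpa using hh))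
  have hlt := i.isLt
  obtain ⟨c, hc⟩ := hd
  rcases c with _ | _ | c
  · omega
  · omega
  · have h2 : n * 2 ≤ i.val + i.val := hc ▸ Nat.mul_le_mul_left n (by omega)
    omega

omit [NeZero n] in
lemma fin_exists_ne (h4 : 4 ≤ n) (x y z : Fin n) :
    ∃ k : Fin n, k ≠ x ∧ k ≠ y ∧ k ≠ z := by
  by_contra hc
  push_neg at hc
  have hsub : (Finset.univ : Finset (Fin n)) ⊆ {x, y, z} := by
    intro k _
    simp only [Finset.mem_insert, Finset.mem_singleton]
    by_cases h1 : k = x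
    · exact Or.inl h1
    by_cases h2 : k = y
    · exact Or.inr (Or.inl h2)
    exact Or.inr (Or.inr (hc k h1 h2))
  have h1 := Finset.card_le_card hsub
  have h2 : ({x, y, z} : Finset (Fin n)).card ≤ 3 := by
    apply le_trans (Finset.card_insert_le _ _)
    have := Finset.card_insert_le y ({z} : Finset (Fin n))
    simp at this ⊢
    omega
  simp [Finset.card_univ] at h1
  omega

lemma pcfFe_ne_of_mem (h3 : 3 ≤ n) {i : Fin n} {s : Sym2 (Fin n)}
    (hs : s ∈ (⊤ : SimpleGraph (Fin n)).edgeSet) (hi : i ∈ s) :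
    pcfFe n s ≠ i := by
  induction s using Sym2.ind with
  | _ a b =>
    have hab : a ≠ b := by simpa [SimpleGraph.mem_edgeSet] using hs
    rw [pcfFe_mk]
    rcases Sym2.mem_iff.mp hi with rfl | rfl
    · exact pcfF_ne_left h3 hab
    · exact pcfF_ne_right h3 hab

lemma pcfCol_isPCF (h3 : 3 ≤ n) :
    IsPCFColoring (subdiv (⊤ : SimpleGraph (Fin n))) (pcfCol n) := by
  constructor
  · -- properness
    rintro (i | ⟨s, hs⟩) (j | ⟨t, ht⟩) hadj
    · exact absurd hadj (subdiv_not_adj_inl_inl _ _ _)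
    · rw [subdiv_adj_inl_inr] at hadj
      simp only [pcfCol, Sum.elim_inl, Sum.elim_inr, id]
      exact fun h => pcfFe_ne_of_mem h3 ht hadj h.symm
    · rw [SimpleGraph.adj_comm, subdiv_adj_inl_inr] at hadj
      simp only [pcfCol, Sum.elim_inl, Sum.elim_inr, id]
      exact pcfFe_ne_of_mem h3 hs hadj
    · exact absurd hadj (subdiv_not_adj_inr_inr _ _ _)
  · -- PCF condition
    rintro (i | ⟨s, hs⟩) hne
    · -- vertex inl i
      by_cases hi : i = 0
      · subst hi
        -- witness color 2, from the edge s(0,1)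
        have h01 : ((0 : Fin n)) ≠ 1 := Ne.symm (fin_one_ne_zero h3)
        have hedge : s((0 : Fin n), 1) ∈ (⊤ : SimpleGraph (Fin n)).edgeSet := by
          simp [SimpleGraph.mem_edgeSet, h01]
        refine ⟨2, Sum.inr ⟨s((0:Fin n), 1), hedge⟩, ⟨?_, ?_⟩, ?_⟩
        · rw [subdiv_mem_nbhd_inl]
          exact ⟨_, rfl, Sym2.mem_mk_left _ _⟩
        · simp only [pcfCol, Sum.elim_inr, pcfFe_mk]
          exact (pcfF_zero_eq_two_iff h3).mpr rfl
        · rintro u ⟨hmem, hcol⟩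
          rw [subdiv_mem_nbhd_inl] at hmem
          obtain ⟨⟨t, ht⟩, rfl, hmt⟩ := hmem
          simp only [pcfCol, Sum.elim_inr] at hcol
          congr 1
          apply Subtype.ext
          revert ht hmt hcol
          induction t using Sym2.ind with
          | _ a b =>
            intro ht hmt hcol
            rw [pcfFe_mk] at hcol
            rcases Sym2.mem_iff.mp hmt with rfl | rfl
            · have hb := (pcfF_zero_eq_two_iff h3).mp hcol
              subst hb
              rfl
            · rw [pcfF_symm] at hcol
              have hb := (pcfF_zero_eq_two_iff h3).mp hcol
              subst hb
              exact Sym2.eq_swap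
      · -- vertex inl i, i ≠ 0
        set a := pcfF n 0 i with ha_def
        have ha : a ≠ 0 := pcfF_zero_ne_zero h3 i
        obtain ⟨k, hk_i, hk_2i, hk_a⟩ : ∃ k : Fin n, k ≠ i ∧ k ≠ i + i ∧ k ≠ a := by
          by_cases h2i : i + i = 0
          · obtain ⟨k, h1, h2, h3'⟩ :=
              fin_exists_ne (four_le_of_add_self h3 hi h2i) i 0 a
            exact ⟨k, h1, fun hh => h2 (h2i ▸ hh), h3'⟩
          · exact ⟨0, Ne.symm hi, Ne.symm h2i, Ne.symm ha⟩
        set j := k - i with hj_def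
        have hj0 : j ≠ 0 := fun h => hk_i (by rwa [hj_def, sub_eq_zero] at h)
        have hji : j ≠ i := fun h => hk_2i (by
          rw [hj_def] at h
          exact sub_eq_iff_eq_add.mp h)
        have hedge : s(i, j) ∈ (⊤ : SimpleGraph (Fin n)).edgeSet := by
          simp [SimpleGraph.mem_edgeSet, Ne.symm hji]
        have hcol0 : pcfF n i j = k := by
          rw [pcfF_of_ne_zero hi hj0, hj_def]
          abel
        refine ⟨k, Sum.inr ⟨s(i, j), hedge⟩, ⟨?_, ?_⟩, ?_⟩
        · rw [subdiv_mem_nbhd_inl]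
          exact ⟨_, rfl, Sym2.mem_mk_left _ _⟩
        · simp only [pcfCol, Sum.elim_inr, pcfFe_mk]
          exact hcol0
        · rintro u ⟨hmem, hcol⟩
          rw [subdiv_mem_nbhd_inl] at hmem
          obtain ⟨⟨t, ht⟩, rfl, hmt⟩ := hmem
          simp only [pcfCol, Sum.elim_inr] at hcol
          congr 1
          apply Subtype.ext
          revert ht hmt hcol
          induction t using Sym2.ind with
          | _ x y =>
            intro ht hmt hcol
            rw [pcfFe_mk] at hcol
            have key : ∀ y' : Fin n, y' ≠ i → pcfF n i y' = k → y' = j := by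
              intro y' hy'i hy'
              by_cases hy'0 : y' = 0
              · exfalso
                subst hy'0
                rw [pcfF_symm] at hy'
                exact hk_a (by rw [ha_def]; exact hy'.symm)
              · rw [pcfF_of_ne_zero hi hy'0] at hy'
                rw [hj_def, ← hy']
                abel
            have hxy : x ≠ y := by simpa [SimpleGraph.mem_edgeSet] using ht
            rcases Sym2.mem_iff.mp hmt with rfl | rfl
            · have hy := key y (Ne.symm hxy) hcol
              subst hy
              rfl
            · rw [pcfF_symm] at hcol
              have hx := key x hxy hcol
              subst hx
              exact Sym2.eq_swap
    · -- vertex inr ⟨s, hs⟩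
      revert hs hne
      induction s using Sym2.ind with
      | _ a b =>
        intro hs hne
        have hab : a ≠ b := by simpa [SimpleGraph.mem_edgeSet] using hs
        refine ⟨a, Sum.inl a, ⟨?_, rfl⟩, ?_⟩
        · rw [subdiv_mem_nbhd_inr]
          exact ⟨a, rfl, Sym2.mem_mk_left _ _⟩
        · rintro u ⟨hmem, hcol⟩
          rw [subdiv_mem_nbhd_inr] at hmem
          obtain ⟨v, rfl, hv⟩ := hmem
          simp only [pcfCol, Sum.elim_inl, id] at hcol
          rcases Sym2.mem_iff.mp hv with rfl | rfl
          · rfl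
          · exact absurd hcol (Ne.symm hab)

end MoreAux

theorem pcf_subdiv_complete (n : ℕ) (hn : 3 ≤ n) :
    pcfChromNum (subdiv (⊤ : SimpleGraph (Fin n))) = n := by
  haveI : NeZero n := ⟨by omega⟩
  have hmem : n ∈ {m | ∃ c : (Fin n ⊕ (⊤ : SimpleGraph (Fin n)).edgeSet) → Fin m,
      IsPCFColoring (subdiv (⊤ : SimpleGraph (Fin n))) c} :=
    ⟨pcfCol n, pcfCol_isPCF hn⟩
  apply le_antisymm
  · exact Nat.sInf_le hmem
  · refine le_csInf ⟨n, hmem⟩ ?_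
    rintro m ⟨c, hprop, hpcf⟩
    have hinj : Function.Injective (fun i : Fin n => c (Sum.inl i)) := by
      intro i j hij
      by_contra hne
      have hedge : s(i, j) ∈ (⊤ : SimpleGraph (Fin n)).edgeSet := by
        simp [SimpleGraph.mem_edgeSet, hne]
      set e : (⊤ : SimpleGraph (Fin n)).edgeSet := ⟨s(i, j), hedge⟩ with he
      have hmi : (Sum.inl i : Fin n ⊕ (⊤ : SimpleGraph (Fin n)).edgeSet) ∈
          (subdiv (⊤ : SimpleGraph (Fin n))).neighborSet (Sum.inr e) := by
        rw [subdiv_mem_nbhd_inr]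
        exact ⟨i, rfl, Sym2.mem_mk_left _ _⟩
      have hmj : (Sum.inl j : Fin n ⊕ (⊤ : SimpleGraph (Fin n)).edgeSet) ∈
          (subdiv (⊤ : SimpleGraph (Fin n))).neighborSet (Sum.inr e) := by
        rw [subdiv_mem_nbhd_inr]
        exact ⟨j, rfl, Sym2.mem_mk_right _ _⟩
      obtain ⟨k, u, ⟨hum, huc⟩, huniq⟩ := hpcf _ ⟨_, hmi⟩
      have hu : u = Sum.inl i ∨ u = Sum.inl j := by
        rw [subdiv_mem_nbhd_inr] at hum
        obtain ⟨v, rfl, hv⟩ := hum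
        rcases Sym2.mem_iff.mp hv with rfl | rfl
        · exact Or.inl rfl
        · exact Or.inr rfl
      have hij' : c (Sum.inl i) = c (Sum.inl j) := hij
      have hki : c (Sum.inl i) = k := by
        rcases hu with rfl | rfl
        · exact huc
        · exact hij'.trans huc
      have hkj : c (Sum.inl j) = k := hij'.symm.trans hki
      have h1 := huniq (Sum.inl i) ⟨hmi, hki⟩
      have h2 := huniq (Sum.inl j) ⟨hmj, hkj⟩
      exact hne (Sum.inl.inj (h1.trans h2.symm))
    have := Fintype.card_le_of_injective _ hinj
    simpa using this
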